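/- Let Ω ⊆ EuclideanSpace ℝ (Fin m) be open, let φ₁,…,φ_k : Ω → ℂ be twice continuously differentiable, write Φ = (φ₁,…,φ_k) : Ω → ℂ^k, let U ⊆ ℂ^k be open with Φ(Ω) ⊆ U, and let F : ℂ^k → ℂ be complex-differentiable at every point of U (holomorphic on U). Then on Ω: Δ(F∘Φ) = Σ_{i=1}^k (∂F/∂z_i ∘ Φ)·Δφ_i + Σ_{i,j=1}^k (∂²F/∂z_i∂z_j ∘ Φ)·κ(φ_i,φ_j), and κ(F∘Φ, F∘Φ) = Σ_{i,j=1}^k (∂F/∂z_i ∘ Φ)·(∂F/∂z_j ∘ Φ)·κ(φ_i,φ_j). -/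

import Mathlib

open Metric Complex MeasureTheory intervalIntegral Real

set_option maxHeartbeats 1000000
set_option synthInstance.maxHeartbeats 400000

lemma osgood_dir {k : ℕ} {U : Set (Fin k → ℂ)} (hU : IsOpen U) {F : (Fin k → ℂ) → ℂ}
    (hF : ∀ z ∈ U, DifferentiableAt ℂ F z) (v : Fin k → ℂ) {z₀ : Fin k → ℂ} (hz₀ : z₀ ∈ U) :
    DifferentiableAt ℂ (fun z => fderiv ℂ F z v) z₀ := by
  obtain ⟨R, hR0, hRU⟩ : ∃ R > 0, closedBall z₀ R ⊆ U := by
    rcases (Metric.nhds_basis_closedBall.mem_iff).1 (hU.mem_nhds hz₀) with ⟨R, hR0, hRU⟩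
    exact ⟨R, hR0, hRU⟩
  set r : ℝ := R / 3 with hr_def
  have hr : 0 < r := by positivity
  -- bound on F
  have hFc : ContinuousOn F (closedBall z₀ R) := fun z hz =>
    ((hF z (hRU hz)).continuousAt).continuousWithinAt
  obtain ⟨M, hM⟩ := (isCompact_closedBall z₀ R).exists_bound_of_continuousOn hFc
  have hM0 : 0 ≤ M := le_trans (norm_nonneg _) (hM z₀ (mem_closedBall_self hR0.le))
  -- line derivative fact
  have hline : ∀ (x : Fin k → ℂ) (u : Fin k → ℂ), x ∈ U →
      HasDerivAt (fun t : ℂ => F (x + t • u)) (fderiv ℂ F x u) 0 := by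
    intro x u hx
    have h1 : HasDerivAt (fun t : ℂ => x + t • u) u 0 := by
      simpa using ((hasDerivAt_id (0 : ℂ)).smul_const u).const_add x
    have h2 : HasFDerivAt F (fderiv ℂ F x) (x + (0 : ℂ) • u) := by
      simpa using (hF x hx).hasFDerivAt
    exact h2.comp_hasDerivAt 0 h1
  -- uniform fderiv bound
  have hbound : ∀ x ∈ closedBall z₀ (2 * r), ‖fderiv ℂ F x‖ ≤ M / r := by
    intro x hx
    refine ContinuousLinearMap.opNorm_le_bound _ (by positivity) fun u => ?_
    rcases eq_or_ne u 0 with rfl | hu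
    · simp
    have hu0 : (0 : ℝ) < ‖u‖ := norm_pos_iff.2 hu
    set ρ : ℝ := r / ‖u‖ with hρ_def
    have hρ : 0 < ρ := by positivity
    have hmem : ∀ t : ℂ, ‖t‖ ≤ ρ → x + t • u ∈ closedBall z₀ R := by
      intro t ht
      have : ‖x + t • u - z₀‖ ≤ ‖x - z₀‖ + ‖t • u‖ := by
        have : x + t • u - z₀ = (x - z₀) + t • u := by abel
        rw [this]; exact norm_add_le _ _
      rw [mem_closedBall, dist_eq_norm]
      have h2 : ‖t • u‖ ≤ r := by
        rw [norm_smul]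
        calc ‖t‖ * ‖u‖ ≤ ρ * ‖u‖ := by gcongr
        _ = r := by rw [hρ_def]; field_simp
      have h3 : ‖x - z₀‖ ≤ 2 * r := by
        have := mem_closedBall.1 hx; rwa [dist_eq_norm] at this
      calc ‖x + t • u - z₀‖ ≤ ‖x - z₀‖ + ‖t • u‖ := this
        _ ≤ 2 * r + r := by gcongr
        _ = R := by rw [hr_def]; ring
    have hdc : DiffContOnCl ℂ (fun t : ℂ => F (x + t • u)) (ball 0 ρ) := by
      constructor
      · intro t ht
        have htm : x + t • u ∈ U := hRU (hmem t (mem_ball_zero_iff.1 ht).le)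
        exact (((hF _ htm).comp t
          (((differentiableAt_id.smul_const u)).const_add x)).differentiableWithinAt)
      · rw [closure_ball 0 hρ.ne']
        refine hFc.comp (Continuous.continuousOn (by continuity)) fun t ht => hmem t ?_
        exact mem_closedBall_zero_iff.1 ht
    have hC : ∀ t ∈ sphere (0 : ℂ) ρ, ‖F (x + t • u)‖ ≤ M := fun t ht => by
      exact hM _ (hmem t (mem_sphere_zero_iff_norm.1 ht).le)
    have hkey := Complex.norm_deriv_le_of_forall_mem_sphere_norm_le hρ hdc hC
    have hx' : x ∈ U := hRU (closedBall_subset_closedBall (by rw [hr_def]; linarith) hx)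
    rw [(hline x u hx').deriv] at hkey
    calc ‖fderiv ℂ F x u‖ ≤ M / ρ := hkey
      _ = M / r * ‖u‖ := by rw [hρ_def]; field_simp
  have hsub2 : closedBall z₀ (2 * r) ⊆ U :=
    subset_trans (closedBall_subset_closedBall (by rw [hr_def]; linarith)) hRU
  set s : ℝ := r / (‖v‖ + 1) with hs_def
  have hs : 0 < s := by positivity
  have hsv : s * ‖v‖ + s ≤ r := by
    have : s * (‖v‖ + 1) = r := by rw [hs_def]; field_simp
    nlinarith
  have hmem2 : ∀ z ∈ ball z₀ r, ∀ t : ℂ, ‖t‖ ≤ s → z + t • v ∈ closedBall z₀ (2 * r) := by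
    intro z hz t ht
    have h1 : z + t • v - z₀ = (z - z₀) + t • v := by abel
    rw [mem_closedBall, dist_eq_norm, h1]
    have h2 : ‖z - z₀‖ < r := by
      have := mem_ball.1 hz; rwa [dist_eq_norm] at this
    have h3 : ‖t • v‖ ≤ s * ‖v‖ := by
      rw [norm_smul]; gcongr
    calc ‖(z - z₀) + t • v‖ ≤ ‖z - z₀‖ + ‖t • v‖ := norm_add_le _ _
      _ ≤ r + s * ‖v‖ := add_le_add h2.le h3
      _ ≤ 2 * r := by nlinarith
  -- representation formula
  have hrep : ∀ z ∈ ball z₀ r, fderiv ℂ F z v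
      = (2 * π * I : ℂ)⁻¹ • ∮ τ in C(0, s), (τ - 0) ^ (-2 : ℤ) • F (z + τ • v) := by
    intro z hz
    have hdc : DiffContOnCl ℂ (fun t : ℂ => F (z + t • v)) (ball 0 s) := by
      constructor
      · intro t ht
        have htm : z + t • v ∈ U := hsub2 (hmem2 z hz t (mem_ball_zero_iff.1 ht).le)
        exact (((hF _ htm).comp t
          ((differentiableAt_id.smul_const v).const_add z)).differentiableWithinAt)
      · rw [closure_ball 0 hs.ne']
        refine (hFc.mono (show closedBall z₀ (2*r) ⊆ closedBall z₀ R from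
          closedBall_subset_closedBall (by rw [hr_def]; linarith))).comp
          (Continuous.continuousOn (by continuity)) fun t ht => ?_
        exact hmem2 z hz t (mem_closedBall_zero_iff.1 ht)
    have hz' : z ∈ U := hRU (closedBall_subset_closedBall
      (show r ≤ R by rw [hr_def]; linarith) (ball_subset_closedBall hz))
    rw [← (hline z v hz').deriv]
    have h : (∮ τ in C(0, s), (1 / (τ - 0) ^ 2) • F (z + τ • v))
        = (2 * π * I) • deriv (fun t : ℂ => F (z + t • v)) 0 :=
      hdc.deriv_eq_smul_circleIntegral hs
    have e : (∮ τ in C(0, s), (τ - 0) ^ (-2 : ℤ) • F (z + τ • v))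
        = ∮ τ in C(0, s), (1 / (τ - 0) ^ 2) • F (z + τ • v) := by
      congr 1; funext τ; simp [zpow_neg]
    rw [e, h, smul_smul, inv_mul_cancel₀ two_pi_I_ne_zero, one_smul]
  -- the parametrized integrand
  set G : (Fin k → ℂ) → ℝ → ℂ := fun z θ =>
    deriv (circleMap 0 s) θ • ((circleMap 0 s θ - 0) ^ (-2 : ℤ) • F (z + circleMap 0 s θ • v))
    with hG_def
  set G' : (Fin k → ℂ) → ℝ → ((Fin k → ℂ) →L[ℂ] ℂ) := fun z θ =>
    deriv (circleMap 0 s) θ • ((circleMap 0 s θ - 0) ^ (-2 : ℤ) •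
      fderiv ℂ F (z + circleMap 0 s θ • v)) with hG'_def
  have hτnorm : ∀ θ : ℝ, ‖circleMap 0 s θ‖ = s := by
    intro θ
    rw [norm_circleMap_zero, abs_of_pos hs]
  have hcont : ∀ x ∈ ball z₀ r, Continuous (G x) := by
    intro x hx
    have hc1 : Continuous fun θ : ℝ => deriv (circleMap 0 s) θ := by
      simp only [deriv_circleMap]; exact (continuous_circleMap 0 s).mul continuous_const
    have hc2 : Continuous fun θ : ℝ => (circleMap 0 s θ - 0) ^ (-2 : ℤ) := by
      refine Continuous.zpow₀ ((continuous_circleMap 0 s).sub continuous_const) _ fun θ => ?_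
      left; exact sub_ne_zero.2 (circleMap_ne_center hs.ne')
    have hc3 : Continuous fun θ : ℝ => F (x + circleMap 0 s θ • v) := by
      refine (hFc.mono (show closedBall z₀ (2*r) ⊆ closedBall z₀ R from
        closedBall_subset_closedBall (by rw [hr_def]; linarith))).comp_continuous
        (continuous_const.add ((continuous_circleMap 0 s).smul continuous_const)) fun θ => ?_
      exact hmem2 x hx _ (le_of_eq (hτnorm θ))
    exact hc1.smul (hc2.smul hc3)
  have hball : ∀ᶠ x in nhds z₀, x ∈ ball z₀ r := isOpen_ball.eventually_mem (mem_ball_self hr)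
  set B : ℝ := s * (s ^ (-2 : ℤ) * (M / r)) with hB_def
  have key := intervalIntegral.hasFDerivAt_integral_of_dominated_of_fderiv_le
    (𝕜 := ℂ) (μ := MeasureTheory.volume) (F := G) (F' := G') (x₀ := z₀)
    (a := 0) (b := 2 * π) (bound := fun _ => B) (s := ball z₀ r) (ball_mem_nhds z₀ hr)
    (hball.mono fun x hx => (hcont x hx).aestronglyMeasurable)
    ((hcont z₀ (mem_ball_self hr)).intervalIntegrable _ _)
    ?meas ?bnd (intervalIntegrable_const) ?diff
  case meas =>
    have hm : Measurable fun θ : ℝ => fderiv ℂ F (z₀ + circleMap 0 s θ • v) :=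
      (measurable_fderiv ℂ F).comp
        (continuous_const.add ((continuous_circleMap 0 s).smul continuous_const)).measurable
    have hc1 : Continuous fun θ : ℝ => deriv (circleMap 0 s) θ := by
      simp only [deriv_circleMap]; exact (continuous_circleMap 0 s).mul continuous_const
    have hc2 : Continuous fun θ : ℝ => (circleMap 0 s θ - 0) ^ (-2 : ℤ) := by
      refine Continuous.zpow₀ ((continuous_circleMap 0 s).sub continuous_const) _ fun θ => ?_
      left; exact sub_ne_zero.2 (circleMap_ne_center hs.ne')
    exact (hc1.aestronglyMeasurable.smul (hc2.aestronglyMeasurable.smul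
      hm.aestronglyMeasurable))
  case bnd =>
    refine Filter.Eventually.of_forall fun θ _ x hx => ?_
    simp only [hG'_def]
    have h1 : ‖deriv (circleMap 0 s) θ‖ = s := by
      rw [deriv_circleMap, norm_mul, hτnorm θ, Complex.norm_I, mul_one]
    have h2 : ‖(circleMap 0 s θ - 0) ^ (-2 : ℤ)‖ = s ^ (-2 : ℤ) := by
      rw [norm_zpow, sub_zero, hτnorm θ]
    have h3 : ‖fderiv ℂ F (x + circleMap 0 s θ • v)‖ ≤ M / r :=
      hbound _ (hmem2 x hx _ (le_of_eq (hτnorm θ)))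
    have hB0 : (0:ℝ) ≤ B := by rw [hB_def]; positivity
    refine ContinuousLinearMap.opNorm_le_bound _ hB0 fun u => ?_
    simp only [ContinuousLinearMap.smul_apply, smul_eq_mul, norm_mul]
    have hTu : ‖fderiv ℂ F (x + circleMap 0 s θ • v) u‖ ≤ M / r * ‖u‖ :=
      le_trans ((fderiv ℂ F (x + circleMap 0 s θ • v)).le_opNorm u)
        (mul_le_mul_of_nonneg_right h3 (norm_nonneg u))
    rw [h1, h2, hB_def]
    have hsp : (0:ℝ) < s ^ (-2 : ℤ) := by positivity
    calc s * (s ^ (-2:ℤ) * ‖fderiv ℂ F (x + circleMap 0 s θ • v) u‖)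
        ≤ s * (s ^ (-2:ℤ) * (M / r * ‖u‖)) := by gcongr
      _ = s * (s ^ (-2:ℤ) * (M / r)) * ‖u‖ := by ring
  case diff =>
    refine Filter.Eventually.of_forall fun θ _ x hx => ?_
    have hτ : ‖circleMap 0 s θ‖ ≤ s := le_of_eq (hτnorm θ)
    have hx' : x + circleMap 0 s θ • v ∈ U := hsub2 (hmem2 x hx _ hτ)
    have h1 : HasFDerivAt (fun z : Fin k → ℂ => z + circleMap 0 s θ • v)
        (ContinuousLinearMap.id ℂ _) x := (hasFDerivAt_id x).add_const _
    have h2 := (hF _ hx').hasFDerivAt.comp x h1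
    rw [ContinuousLinearMap.comp_id] at h2
    have h3 : HasFDerivAt (fun z : Fin k → ℂ => F (z + circleMap 0 s θ • v))
        (fderiv ℂ F (x + circleMap 0 s θ • v)) x := h2
    exact (h3.const_smul ((circleMap 0 s θ - 0) ^ (-2 : ℤ))).const_smul (deriv (circleMap 0 s) θ)
  have hder := key.differentiableAt.const_smul ((2 * π * I : ℂ)⁻¹)
  refine hder.congr_of_eventuallyEq ?_
  filter_upwards [hball] with z hz
  rw [hrep z hz]
  rfl

lemma clm_sum {k : ℕ} (T : (Fin k → ℂ) →L[ℂ] ℂ) (u : Fin k → ℂ) :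
    T u = ∑ i, u i * T (Pi.single i 1) := by
  conv_lhs => rw [← Finset.univ_sum_single u, map_sum]
  refine Finset.sum_congr rfl fun i _ => ?_
  have h : (Pi.single i (u i) : Fin k → ℂ) = u i • (Pi.single i 1 : Fin k → ℂ) := by
    rw [← Pi.single_smul, smul_eq_mul, mul_one]
  rw [h, _root_.map_smul, smul_eq_mul]

lemma chain_formula {m k : ℕ} {Ω : Set (EuclideanSpace ℝ (Fin m))}
    {φ : Fin k → EuclideanSpace ℝ (Fin m) → ℂ}
    (hφ : ∀ i, ∀ y ∈ Ω, DifferentiableAt ℝ (φ i) y)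
    {U : Set (Fin k → ℂ)} (hΦU : ∀ y ∈ Ω, (fun i => φ i y) ∈ U)
    {G : (Fin k → ℂ) → ℂ} (hG : ∀ z ∈ U, DifferentiableAt ℂ G z)
    {y : EuclideanSpace ℝ (Fin m)} (hy : y ∈ Ω) (v : EuclideanSpace ℝ (Fin m)) :
    fderiv ℝ (fun x => G (fun i => φ i x)) y v
      = ∑ i, fderiv ℂ G (fun i => φ i y) (Pi.single i 1) * fderiv ℝ (φ i) y v := by
  have hdiff : ∀ i, DifferentiableAt ℝ (φ i) y := fun i => hφ i y hy
  have hΦd : DifferentiableAt ℝ (fun x (i : Fin k) => φ i x) y := differentiableAt_pi.2 hdiff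
  have hGd : DifferentiableAt ℂ G (fun i => φ i y) := hG _ (hΦU y hy)
  have e1 : fderiv ℝ (fun x => G (fun i => φ i x)) y v
      = fderiv ℂ G (fun i => φ i y) (fderiv ℝ (fun x (i : Fin k) => φ i x) y v) := by
    have h := ((hGd.hasFDerivAt.restrictScalars ℝ).comp y hΦd.hasFDerivAt).fderiv
    rw [show (fun x => G (fun i => φ i x)) = G ∘ (fun x (i : Fin k) => φ i x) from rfl, h]
    rfl
  have e2 : fderiv ℝ (fun x (i : Fin k) => φ i x) y v = fun i => fderiv ℝ (φ i) y v := by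
    rw [fderiv_pi hdiff]; rfl
  rw [e1, e2, clm_sum]
  exact Finset.sum_congr rfl fun i _ => mul_comm _ _

lemma sum_rearrange {m k : ℕ} (P : Fin k → ℂ) (D Q : Fin k → Fin m → ℂ) (S : Fin k → Fin k → ℂ) :
    ∑ a : Fin m, ∑ i : Fin k, (P i * D i a + Q i a * ∑ j : Fin k, S i j * Q j a)
      = (∑ i : Fin k, P i * ∑ a : Fin m, D i a) +
        ∑ i : Fin k, ∑ j : Fin k, S i j * ∑ a : Fin m, Q i a * Q j a := by
  have e1 : ∑ a : Fin m, ∑ i : Fin k, (P i * D i a + Q i a * ∑ j : Fin k, S i j * Q j a)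
      = (∑ a : Fin m, ∑ i : Fin k, P i * D i a)
        + ∑ a : Fin m, ∑ i : Fin k, ∑ j : Fin k, S i j * (Q i a * Q j a) := by
    rw [← Finset.sum_add_distrib]
    refine Finset.sum_congr rfl fun a _ => ?_
    rw [← Finset.sum_add_distrib]
    refine Finset.sum_congr rfl fun i _ => ?_
    congr 1
    rw [Finset.mul_sum]
    exact Finset.sum_congr rfl fun j _ => by ring
  have e2 : (∑ a : Fin m, ∑ i : Fin k, P i * D i a)
      = ∑ i : Fin k, P i * ∑ a : Fin m, D i a := by
    rw [Finset.sum_comm]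
    exact Finset.sum_congr rfl fun i _ => by rw [Finset.mul_sum]
  have e3 : (∑ a : Fin m, ∑ i : Fin k, ∑ j : Fin k, S i j * (Q i a * Q j a))
      = ∑ i : Fin k, ∑ j : Fin k, S i j * ∑ a : Fin m, Q i a * Q j a := by
    rw [Finset.sum_comm]
    refine Finset.sum_congr rfl fun i _ => ?_
    rw [Finset.sum_comm]
    exact Finset.sum_congr rfl fun j _ => by rw [Finset.mul_sum]
  rw [e1, e2, e3]

lemma sum_rearrange2 {m k : ℕ} (P : Fin k → ℂ) (Q : Fin k → Fin m → ℂ) :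
    ∑ a : Fin m, (∑ i : Fin k, P i * Q i a) * (∑ j : Fin k, P j * Q j a)
      = ∑ i : Fin k, ∑ j : Fin k, P i * P j * ∑ a : Fin m, Q i a * Q j a := by
  have e1 : ∑ a : Fin m, (∑ i : Fin k, P i * Q i a) * (∑ j : Fin k, P j * Q j a)
      = ∑ a : Fin m, ∑ i : Fin k, ∑ j : Fin k, P i * P j * (Q i a * Q j a) := by
    refine Finset.sum_congr rfl fun a _ => ?_
    rw [Finset.sum_mul_sum]
    exact Finset.sum_congr rfl fun i _ => Finset.sum_congr rfl fun j _ => by ring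
  have e3 : (∑ a : Fin m, ∑ i : Fin k, ∑ j : Fin k, P i * P j * (Q i a * Q j a))
      = ∑ i : Fin k, ∑ j : Fin k, P i * P j * ∑ a : Fin m, Q i a * Q j a := by
    rw [Finset.sum_comm]
    refine Finset.sum_congr rfl fun i _ => ?_
    rw [Finset.sum_comm]
    exact Finset.sum_congr rfl fun j _ => by rw [Finset.mul_sum]
  rw [e1, e3]

/-- The flat Laplacian `Δf(x) = ∑ₐ ∂²f/∂xₐ²(x)` on Euclidean space. -/
noncomputable def lap {m : ℕ} {F : Type*} [NormedAddCommGroup F] [NormedSpace ℝ F]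
    (f : EuclideanSpace ℝ (Fin m) → F) (x : EuclideanSpace ℝ (Fin m)) : F :=
  ∑ a : Fin m, fderiv ℝ (fun y => fderiv ℝ f y (EuclideanSpace.single a 1)) x
    (EuclideanSpace.single a 1)

/-- The conformality operator `κ(φ,ψ)(x) = ∑ₐ (∂φ/∂xₐ)(x)·(∂ψ/∂xₐ)(x)`. -/
noncomputable def kap {m : ℕ} {F : Type*} [NormedRing F] [NormedAlgebra ℝ F]
    (φ ψ : EuclideanSpace ℝ (Fin m) → F) (x : EuclideanSpace ℝ (Fin m)) : F :=
  ∑ a : Fin m, fderiv ℝ φ x (EuclideanSpace.single a 1) * fderiv ℝ ψ x (EuclideanSpace.single a 1)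

theorem lap_kap_comp_holomorphic {m k : ℕ}
    (Ω : Set (EuclideanSpace ℝ (Fin m))) (hΩ : IsOpen Ω)
    (φ : Fin k → EuclideanSpace ℝ (Fin m) → ℂ)
    (hφ : ∀ i, ContDiffOn ℝ 2 (φ i) Ω)
    (Φ : EuclideanSpace ℝ (Fin m) → (Fin k → ℂ)) (hΦ : ∀ x i, Φ x i = φ i x)
    (U : Set (Fin k → ℂ)) (hU : IsOpen U) (hΦU : Φ '' Ω ⊆ U)
    (F : (Fin k → ℂ) → ℂ) (hF : ∀ z ∈ U, DifferentiableAt ℂ F z) :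
    ∀ x ∈ Ω,
      lap (F ∘ Φ) x =
        (∑ i : Fin k, fderiv ℂ F (Φ x) (Pi.single i 1) * lap (φ i) x) +
        (∑ i : Fin k, ∑ j : Fin k,
          fderiv ℂ (fun w => fderiv ℂ F w (Pi.single i 1)) (Φ x) (Pi.single j 1) *
            kap (φ i) (φ j) x) ∧
      kap (F ∘ Φ) (F ∘ Φ) x =
        ∑ i : Fin k, ∑ j : Fin k,
          fderiv ℂ F (Φ x) (Pi.single i 1) * fderiv ℂ F (Φ x) (Pi.single j 1) *
            kap (φ i) (φ j) x := by
  have hΦeq : Φ = fun y (i : Fin k) => φ i y := by funext y i; exact hΦ y i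
  subst hΦeq
  intro x hx
  have hφd : ∀ i, ∀ y ∈ Ω, DifferentiableAt ℝ (φ i) y := fun i y hy =>
    ((hφ i).contDiffAt (hΩ.mem_nhds hy)).differentiableAt (by norm_num)
  have hΦU' : ∀ y ∈ Ω, (fun i => φ i y) ∈ U := fun y hy => hΦU ⟨y, hy, rfl⟩
  have hxU : (fun i => φ i x) ∈ U := hΦU' x hx
  -- the directional derivatives of F and their differentiability
  have hGdiff : ∀ (i : Fin k), ∀ z ∈ U,
      DifferentiableAt ℂ (fun w => fderiv ℂ F w (Pi.single i 1)) z := fun i z hz =>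
    osgood_dir hU hF (Pi.single i 1) hz
  -- first derivative of the composition, on all of Ω
  have hD1 : ∀ y ∈ Ω, ∀ v, fderiv ℝ (F ∘ fun y (i : Fin k) => φ i y) y v
      = ∑ i, fderiv ℂ F (fun i => φ i y) (Pi.single i 1) * fderiv ℝ (φ i) y v := by
    intro y hy v
    exact chain_formula hφd hΦU' hF hy v
  -- abbreviations
  set P : Fin k → ℂ := fun i => fderiv ℂ F (fun j => φ j x) (Pi.single i 1) with hP_def
  set Q : Fin k → Fin m → ℂ := fun i a => fderiv ℝ (φ i) x (EuclideanSpace.single a 1) with hQ_def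
  set S : Fin k → Fin k → ℂ := fun i j =>
    fderiv ℂ (fun w => fderiv ℂ F w (Pi.single i 1)) (fun l => φ l x) (Pi.single j 1) with hS_def
  set D : Fin k → Fin m → ℂ := fun i a =>
    fderiv ℝ (fun y => fderiv ℝ (φ i) y (EuclideanSpace.single a 1)) x
      (EuclideanSpace.single a 1) with hD_def
  -- differentiability of the pieces at x
  have hp : ∀ i : Fin k,
      DifferentiableAt ℝ (fun y => fderiv ℂ F (fun j => φ j y) (Pi.single i 1)) x := by
    intro i
    have h1 : DifferentiableAt ℝ (fun w => fderiv ℂ F w (Pi.single i 1)) (fun j => φ j x) :=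
      (hGdiff i _ hxU).restrictScalars ℝ
    have h2 : DifferentiableAt ℝ (fun y (j : Fin k) => φ j y) x :=
      differentiableAt_pi.2 fun j => hφd j x hx
    exact h1.comp x h2
  have hq : ∀ (i : Fin k) (a : Fin m),
      DifferentiableAt ℝ (fun y => fderiv ℝ (φ i) y (EuclideanSpace.single a 1)) x := by
    intro i a
    have h1 : ContDiffAt ℝ 1 (fderiv ℝ (φ i)) x :=
      ((hφ i).contDiffAt (hΩ.mem_nhds hx)).fderiv_right (by norm_num)
    exact (h1.differentiableAt one_ne_zero).clm_apply (differentiableAt_const _)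
  -- second derivative of each p i in direction a
  have hdp : ∀ (i : Fin k) (a : Fin m),
      fderiv ℝ (fun y => fderiv ℂ F (fun j => φ j y) (Pi.single i 1)) x
        (EuclideanSpace.single a 1) = ∑ j, S i j * Q j a := by
    intro i a
    exact chain_formula hφd hΦU' (hGdiff i) hx (EuclideanSpace.single a 1)
  -- key second-derivative computation
  have step : ∀ a : Fin m,
      fderiv ℝ (fun y => fderiv ℝ (F ∘ fun y (i : Fin k) => φ i y) y
          (EuclideanSpace.single a 1)) x (EuclideanSpace.single a 1)
        = ∑ i, (P i * D i a + Q i a * ∑ j, S i j * Q j a) := by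
    intro a
    have heq : (fun y => fderiv ℝ (F ∘ fun y (i : Fin k) => φ i y) y (EuclideanSpace.single a 1))
        =ᶠ[nhds x] fun y => ∑ i, (fun y => fderiv ℂ F (fun j => φ j y) (Pi.single i 1)
            * fderiv ℝ (φ i) y (EuclideanSpace.single a 1)) y := by
      filter_upwards [hΩ.mem_nhds hx] with y hy
      exact hD1 y hy (EuclideanSpace.single a 1)
    have hprod : ∀ i : Fin k, DifferentiableAt ℝ
        (fun y => fderiv ℂ F (fun j => φ j y) (Pi.single i 1)
          * fderiv ℝ (φ i) y (EuclideanSpace.single a 1)) x :=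
      fun i => (hp i).mul (hq i a)
    calc fderiv ℝ (fun y => fderiv ℝ (F ∘ fun y (i : Fin k) => φ i y) y
            (EuclideanSpace.single a 1)) x (EuclideanSpace.single a 1)
        = fderiv ℝ (fun y => ∑ i, (fun y => fderiv ℂ F (fun j => φ j y) (Pi.single i 1)
            * fderiv ℝ (φ i) y (EuclideanSpace.single a 1)) y) x (EuclideanSpace.single a 1) := by
          rw [heq.fderiv_eq]
      _ = (∑ i, fderiv ℝ (fun y => fderiv ℂ F (fun j => φ j y) (Pi.single i 1)
            * fderiv ℝ (φ i) y (EuclideanSpace.single a 1)) x) (EuclideanSpace.single a 1) := by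
          rw [fderiv_fun_sum fun i _ => hprod i]
      _ = ∑ i, (P i * D i a + Q i a * ∑ j, S i j * Q j a) := by
          rw [ContinuousLinearMap.sum_apply]
          refine Finset.sum_congr rfl fun i _ => ?_
          rw [fderiv_fun_mul (hp i) (hq i a)]
          rw [ContinuousLinearMap.add_apply, ContinuousLinearMap.smul_apply,
            ContinuousLinearMap.smul_apply, smul_eq_mul, smul_eq_mul, hdp i a]
  constructor
  · -- Laplacian identity
    have hlap : lap (F ∘ fun y (i : Fin k) => φ i y) x
        = ∑ a : Fin m, ∑ i, (P i * D i a + Q i a * ∑ j, S i j * Q j a) := by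
      unfold lap
      exact Finset.sum_congr rfl fun a _ => step a
    rw [hlap, sum_rearrange P D Q S]
    congr 1
  · -- conformality identity
    have hkap : kap (F ∘ fun y (i : Fin k) => φ i y) (F ∘ fun y (i : Fin k) => φ i y) x
        = ∑ a : Fin m, (∑ i, P i * Q i a) * (∑ j, P j * Q j a) := by
      unfold kap
      refine Finset.sum_congr rfl fun a _ => ?_
      rw [hD1 x hx (EuclideanSpace.single a 1)]
    rw [hkap, sum_rearrange2 P Q]
    rfl
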